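/- Let h ∈ ℂ[X,Y] be non-zero. If a(X) ∈ ℂ((1/X))* is a non-zero solution of h(X, a(X)) = 0, then there exists a segment S of the right Newton polygon of h with deg a = (|S₁|/|S₂|)·σ(S) and in(h,S)(X, a⁺(X)) = 0. -/

import Mathlib

open scoped Classical

noncomputable section

/-- A (candidate) segment in the plane, given by its two lattice endpoints. -/
structure Seg where
  P : ℕ × ℕ
  Q : ℕ × ℕ

/-- the support of a polynomial in two variables, as a finite set of pairs `(α,β)`. -/
def supp (h : MvPolynomial (Fin 2) ℂ) : Finset (ℕ × ℕ) :=
  h.support.image fun d => (d 0, d 1)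

/-- the coefficient `h_{αβ}` of `X^α Y^β` in `h`. -/
def coeff2 (h : MvPolynomial (Fin 2) ℂ) (p : ℕ × ℕ) : ℂ :=
  MvPolynomial.coeff (Finsupp.single 0 p.1 + Finsupp.single 1 p.2) h

/-- the linear functional whose level lines are parallel to `S`, normalized so that
(for a right-polygon segment, `S.P.2 < S.Q.2`) its gradient points to the right. -/
def lfun (S : Seg) (v : ℕ × ℕ) : ℤ :=
  ((S.Q.2 : ℤ) - S.P.2) * v.1 - ((S.Q.1 : ℤ) - S.P.1) * v.2

/-- the linear functional whose level lines are parallel to `S`, normalized so that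
(for a top-polygon segment, `S.P.1 < S.Q.1`) its gradient points upwards. -/
def gfun (S : Seg) (v : ℕ × ℕ) : ℤ :=
  ((S.Q.1 : ℤ) - S.P.1) * v.2 - ((S.Q.2 : ℤ) - S.P.2) * v.1

/-- `v` lies on the segment with endpoints `S.P` and `S.Q`
(collinear and inside the bounding box). -/
def OnSeg (S : Seg) (v : ℕ × ℕ) : Prop :=
  lfun S v = lfun S S.P ∧
  min S.P.1 S.Q.1 ≤ v.1 ∧ v.1 ≤ max S.P.1 S.Q.1 ∧
  min S.P.2 S.Q.2 ≤ v.2 ∧ v.2 ≤ max S.P.2 S.Q.2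

/-- `S` is a segment (one-dimensional boundary face) of the right Newton polygon of `h`:
its endpoints (ordered by increasing ordinate) are in the support, the whole support lies
weakly to the left of the line through `S` (the supporting line has outward normal with
positive first coordinate), and `S` is a maximal face: every support point on this line has
ordinate between those of the endpoints. Such segments are exactly the boundary faces on
the right of the Newton diagram joining the lines `β = ord_Y h` and `β = deg_Y h`. -/
def RightSeg (h : MvPolynomial (Fin 2) ℂ) (S : Seg) : Prop :=
  S.P ∈ supp h ∧ S.Q ∈ supp h ∧ S.P.2 < S.Q.2 ∧
  (∀ v ∈ supp h, lfun S v ≤ lfun S S.P) ∧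
  (∀ v ∈ supp h, lfun S v = lfun S S.P → S.P.2 ≤ v.2 ∧ v.2 ≤ S.Q.2)

/-- `S` is a segment of the top Newton polygon of `h` (endpoints ordered by increasing
abscissa; the supporting line has outward normal with positive second coordinate). -/
def TopSeg (h : MvPolynomial (Fin 2) ℂ) (S : Seg) : Prop :=
  S.P ∈ supp h ∧ S.Q ∈ supp h ∧ S.P.1 < S.Q.1 ∧
  (∀ v ∈ supp h, gfun S v ≤ gfun S S.P) ∧
  (∀ v ∈ supp h, gfun S v = gfun S S.P → S.P.1 ≤ v.1 ∧ v.1 ≤ S.Q.1)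

/-- `σ(S)` for a right-polygon segment (endpoints ordered by increasing ordinate):
`0` if `S` is vertical, otherwise minus the sign of the slope of `S`. -/
def sigmaR (S : Seg) : ℤ :=
  if S.P.1 = S.Q.1 then 0 else if S.P.1 < S.Q.1 then -1 else 1

/-- `σ(S)` for a top-polygon segment (endpoints ordered by increasing abscissa). -/
def sigmaT (S : Seg) : ℤ :=
  if S.P.2 = S.Q.2 then 0 else if S.P.2 < S.Q.2 then -1 else 1

/-- `|S₁|`, the length of the projection of `S` on the horizontal axis. -/
def len1 (S : Seg) : ℚ := |(S.Q.1 : ℚ) - S.P.1|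

/-- `|S₂|`, the length of the projection of `S` on the vertical axis. -/
def len2 (S : Seg) : ℚ := |(S.Q.2 : ℚ) - S.P.2|

/-- the declivity `(|S₁|/|S₂|)·σ(S)` of a right-polygon segment. -/
def decl (S : Seg) : ℚ := len1 S / len2 S * (sigmaR S : ℚ)

/-- the declivity `(|S₂|/|S₁|)·σ(S)` of a top-polygon segment. -/
def tdecl (S : Seg) : ℚ := len2 S / len1 S * (sigmaT S : ℚ)

/-- `α(S)`: the abscissa of the intersection of the line through `S` with the
horizontal axis. -/
def alphaS (S : Seg) : ℚ := (S.P.1 : ℚ) + (S.P.2 : ℚ) * decl S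

/-- `β(S)`: the ordinate of the intersection of the line through `S` with the
vertical axis. -/
def betaS (S : Seg) : ℚ := (S.P.2 : ℚ) + (S.P.1 : ℚ) * tdecl S

/-- a right-polygon segment is exceptional if it joins the horizontal axis with a
point of the form `(p, 1)`. -/
def RExcep (S : Seg) : Prop := S.P.2 = 0 ∧ S.Q.2 = 1

/-- a top-polygon segment is exceptional if it joins the vertical axis with a
point of the form `(1, q)`. -/
def TExcep (S : Seg) : Prop := S.P.1 = 0 ∧ S.Q.1 = 1

/-- `in(h,S)`: the sum of the monomials of `h` supported on the segment `S`. -/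
def inPoly (h : MvPolynomial (Fin 2) ℂ) (S : Seg) : MvPolynomial (Fin 2) ℂ :=
  ∑ p ∈ (supp h).filter (OnSeg S),
    MvPolynomial.monomial (Finsupp.single 0 p.1 + Finsupp.single 1 p.2) (coeff2 h p)

/-! Laurent–Puiseux series in `1/X` are modelled as Hahn series over `ℚᵒᵈ`:
formal series `∑ a_θ X^θ` with complex coefficients whose rational exponents form a
set that is well-ordered downwards (in particular bounded above); this field contains
`ℂ((1/X))* = ⋃_k ℂ((X^(−1/k)))` and is algebraically closed. -/
abbrev K : Type := HahnSeries ℚᵒᵈ ℂ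

/-- the degree of a Laurent–Puiseux series: its largest exponent. -/
def degLP (a : K) : ℚ := OrderDual.ofDual a.order

/-- `a⁺`, the leading term of a Laurent–Puiseux series. -/
def lead (a : K) : K := HahnSeries.single a.order a.leadingCoeff

/-- `X^θ` as a Laurent–Puiseux series. -/
def XpowQ (θ : ℚ) : K := HahnSeries.single (OrderDual.toDual θ) 1

/-- the substitution `h(X, a(X))` of a Laurent–Puiseux series for `Y` in `h`. -/
def substY (h : MvPolynomial (Fin 2) ℂ) (a : K) : K :=
  ∑ p ∈ supp h,
    (HahnSeries.single (OrderDual.toDual (p.1 : ℚ)) (coeff2 h p) : K) * a ^ p.2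

/-- the substitution `in(h,S)(X, a(X))` of a Laurent–Puiseux series for `Y` in `in(h,S)`. -/
def inSub (h : MvPolynomial (Fin 2) ℂ) (S : Seg) (a : K) : K :=
  ∑ p ∈ (supp h).filter (OnSeg S),
    (HahnSeries.single (OrderDual.toDual (p.1 : ℚ)) (coeff2 h p) : K) * a ^ p.2

lemma toDual_add' (x y : ℚ) :
    OrderDual.toDual (x + y) = OrderDual.toDual x + OrderDual.toDual y := rfl

lemma toDual_nsmul' (n : ℕ) (q : ℚ) :
    n • (OrderDual.toDual q) = OrderDual.toDual (n * q) := by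
  show n • q = n * q; exact nsmul_eq_mul n q

lemma fin2_eq (d : Fin 2 →₀ ℕ) : d = Finsupp.single 0 (d 0) + Finsupp.single 1 (d 1) := by
  ext i; fin_cases i <;> simp

lemma mem_supp_iff {h : MvPolynomial (Fin 2) ℂ} {p : ℕ × ℕ} :
    p ∈ supp h ↔ coeff2 h p ≠ 0 := by
  constructor
  · intro hp
    simp only [supp, Finset.mem_image] at hp
    obtain ⟨D, hD, hDe⟩ := hp
    have : coeff2 h p = MvPolynomial.coeff D h := by
      rw [coeff2, ← hDe]
      congr 1
      exact (fin2_eq D).symm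
    rw [this]
    exact (MvPolynomial.mem_support_iff).1 hD
  · intro hc
    simp only [supp, Finset.mem_image]
    refine ⟨Finsupp.single 0 p.1 + Finsupp.single 1 p.2, MvPolynomial.mem_support_iff.2 hc, ?_⟩
    simp [Finsupp.single_apply]

lemma leadCoeff_pow (x : K) (n : ℕ) : (x ^ n).leadingCoeff = x.leadingCoeff ^ n := by
  induction n with
  | zero => simp [HahnSeries.leadingCoeff_one]
  | succ n ih =>
    rcases eq_or_ne x 0 with rfl | hx
    · simp [zero_pow]
    · rw [pow_succ, HahnSeries.leadingCoeff_eq,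
        HahnSeries.order_mul (pow_ne_zero _ hx) hx,
        HahnSeries.coeff_mul_order_add_order, ih, pow_succ]

set_option maxHeartbeats 1600000 in
/-- Theorem 6.3(a): if `a(X)` is a non-zero Laurent–Puiseux solution of `h(X,Y) = 0`
(`h ≠ 0`), then there is a segment `S` of the right Newton polygon of `h` with
`deg a = (|S₁|/|S₂|)·σ(S)` and `in(h,S)(X, a⁺(X)) = 0`. -/
theorem stmt13 (h : MvPolynomial (Fin 2) ℂ) (h0 : h ≠ 0) (a : K) (ha : a ≠ 0)
    (hsol : substY h a = 0) :
    ∃ S : Seg, RightSeg h S ∧ degLP a = decl S ∧ inSub h S (lead a) = 0 := by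
  classical
  set d : ℚ := degLP a with hd
  set l : ℂ := a.leadingCoeff with hl
  have hl0 : l ≠ 0 := HahnSeries.leadingCoeff_ne_zero.mpr ha
  have horda : a.order = OrderDual.toDual d := rfl
  clear_value d l
  have hsupp : (supp h).Nonempty := by
    obtain ⟨D, hD⟩ := (MvPolynomial.support_nonempty).2 h0
    exact ⟨(D 0, D 1), Finset.mem_image_of_mem _ hD⟩
  set φ : ℕ × ℕ → ℚ := fun p => (p.1 : ℚ) + d * p.2 with hφdef
  obtain ⟨P0, hP0mem, hP0max⟩ := Finset.exists_max_image (supp h) φ hsupp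
  set M : ℚ := φ P0 with hM
  set F : Finset (ℕ × ℕ) := (supp h).filter (fun p => φ p = M) with hF
  have hP0F : P0 ∈ F := Finset.mem_filter.2 ⟨hP0mem, rfl⟩
  have hFne : F.Nonempty := ⟨P0, hP0F⟩
  -- order and leading coefficient of powers of a
  have hpow_ord : ∀ β : ℕ, (a ^ β).order = OrderDual.toDual (d * β) := by
    intro β
    rw [HahnSeries.order_pow, horda, toDual_nsmul', mul_comm]
  -- coefficient at M of each term of substY
  have hcoeffM : ∀ p ∈ supp h,
      ((HahnSeries.single (OrderDual.toDual (p.1 : ℚ)) (coeff2 h p) : K) * a ^ p.2).coeff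
        (OrderDual.toDual M)
        = if φ p = M then coeff2 h p * l ^ p.2 else 0 := by
    intro p hp
    have key : OrderDual.toDual M
        = OrderDual.toDual (M - (p.1 : ℚ)) + OrderDual.toDual ((p.1 : ℚ)) := by
      rw [← toDual_add', sub_add_cancel]
    rw [key, HahnSeries.coeff_single_mul_add]
    split_ifs with hφp
    · have : OrderDual.toDual (M - (p.1 : ℚ)) = (a ^ p.2).order := by
        rw [hpow_ord]
        congr 1
        simp only [hφdef] at hφp
        linarith
      rw [this, ← HahnSeries.leadingCoeff_eq, leadCoeff_pow, ← hl]
    · have hlt : φ p < M := lt_of_le_of_ne (hP0max p hp) hφp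
      have : OrderDual.toDual (M - (p.1 : ℚ)) < (a ^ p.2).order := by
        rw [hpow_ord]
        have : d * p.2 < M - (p.1 : ℚ) := by simp only [hφdef] at hlt; linarith
        exact this
      rw [HahnSeries.coeff_eq_zero_of_lt_order this, mul_zero]
  -- the key vanishing sum
  have hsum0 : ∑ p ∈ F, coeff2 h p * l ^ p.2 = 0 := by
    have h1 : (substY h a).coeff (OrderDual.toDual M) = 0 := by rw [hsol]; rfl
    rw [substY] at h1
    have h2 : (∑ p ∈ supp h,
        (HahnSeries.single (OrderDual.toDual (p.1 : ℚ)) (coeff2 h p) : K) * a ^ p.2).coeff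
        (OrderDual.toDual M)
        = ∑ p ∈ supp h,
          ((HahnSeries.single (OrderDual.toDual (p.1 : ℚ)) (coeff2 h p) : K) * a ^ p.2).coeff
            (OrderDual.toDual M) :=
      map_sum (HahnSeries.coeff.addMonoidHom (OrderDual.toDual M)) _ _
    rw [h2, Finset.sum_congr rfl hcoeffM] at h1
    have h3 : ∑ p ∈ (supp h).filter (fun p => φ p = M), coeff2 h p * l ^ p.2 = 0 := by
      rw [Finset.sum_filter]; exact h1
    exact h3
  have hterm_ne : ∀ p ∈ F, coeff2 h p * l ^ p.2 ≠ 0 := by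
    intro p hpF
    exact mul_ne_zero (mem_supp_iff.1 (Finset.mem_filter.1 hpF).1) (pow_ne_zero _ hl0)
  have hFeqn : ∀ p ∈ F, (p.1 : ℚ) = M - d * p.2 := by
    intro p hpF
    have := (Finset.mem_filter.1 hpF).2
    simp only [hφdef] at this
    linarith
  -- two distinct ordinates in F
  have h2pts : ∃ p ∈ F, ∃ q ∈ F, p.2 ≠ q.2 := by
    by_contra hcon
    push_neg at hcon
    have hsingle : F = {P0} := by
      apply Finset.eq_singleton_iff_unique_mem.2
      refine ⟨hP0F, fun p hpF => ?_⟩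
      have h2 : p.2 = P0.2 := hcon p hpF P0 hP0F
      have h1 : p.1 = P0.1 := by
        have := hFeqn p hpF
        have := hFeqn P0 hP0F
        have : (p.1 : ℚ) = (P0.1 : ℚ) := by rw [hFeqn p hpF, hFeqn P0 hP0F, h2]
        exact_mod_cast this
      exact Prod.ext h1 h2
    rw [hsingle, Finset.sum_singleton] at hsum0
    exact hterm_ne P0 hP0F hsum0
  obtain ⟨Pm, hPmF, hPmmin⟩ := F.exists_min_image (fun p => p.2) hFne
  obtain ⟨Qm, hQmF, hQmmax⟩ := F.exists_max_image (fun p => p.2) hFne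
  have hPQ : Pm.2 < Qm.2 := by
    obtain ⟨p, hp, q, hq, hpq⟩ := h2pts
    rcases lt_or_ge Pm.2 Qm.2 with h | h
    · exact h
    · exfalso
      have e1 := hPmmin p hp
      have e2 := hQmmax p hp
      have e3 := hPmmin q hq
      have e4 := hQmmax q hq
      omega
  set S : Seg := ⟨Pm, Qm⟩ with hS
  have hφP : φ Pm = M := (Finset.mem_filter.1 hPmF).2
  have hφQ : φ Qm = M := (Finset.mem_filter.1 hQmF).2
  have hn : (0 : ℚ) < (Qm.2 : ℚ) - Pm.2 := by
    have : (Pm.2 : ℚ) < Qm.2 := by exact_mod_cast hPQ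
    linarith
  have hdval : d * ((Qm.2 : ℚ) - Pm.2) = (Pm.1 : ℚ) - Qm.1 := by
    simp only [hφdef] at hφP hφQ
    linarith
  have hlfunQ : ∀ v : ℕ × ℕ, (lfun S v : ℚ) = ((Qm.2 : ℚ) - Pm.2) * φ v := by
    intro v
    simp only [lfun, hS, hφdef]
    push_cast
    linear_combination (-(v.2 : ℚ)) * hdval
  have hlfun_le : ∀ v ∈ supp h, lfun S v ≤ lfun S S.P := by
    intro v hv
    have : (lfun S v : ℚ) ≤ (lfun S S.P : ℚ) := by
      rw [hlfunQ, hlfunQ]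
      have : φ (S.P) = M := hφP
      rw [this]
      exact mul_le_mul_of_nonneg_left (hP0max v hv) (le_of_lt hn)
    exact_mod_cast this
  have hlfun_eq : ∀ v : ℕ × ℕ, lfun S v = lfun S S.P → φ v = M := by
    intro v hv
    have : (lfun S v : ℚ) = (lfun S S.P : ℚ) := by exact_mod_cast hv
    rw [hlfunQ, hlfunQ] at this
    have h2 := mul_left_cancel₀ (ne_of_gt hn) this
    rw [h2]
    exact hφP
  have hright : RightSeg h S := by
    refine ⟨(Finset.mem_filter.1 hPmF).1, (Finset.mem_filter.1 hQmF).1, hPQ, hlfun_le, ?_⟩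
    intro v hv hveq
    have hvF : v ∈ F := Finset.mem_filter.2 ⟨hv, hlfun_eq v hveq⟩
    exact ⟨hPmmin v hvF, hQmmax v hvF⟩
  have hdecl : d = decl S := by
    have hlen2 : len2 S = (Qm.2 : ℚ) - Pm.2 := by
      rw [len2]
      exact abs_of_pos hn
    rcases lt_trichotomy Pm.1 Qm.1 with hlt | heq | hgt
    · have hσ : sigmaR S = -1 := by
        simp only [sigmaR, hS]
        rw [if_neg (by omega), if_pos hlt]
      have hlen1 : len1 S = (Qm.1 : ℚ) - Pm.1 := by
        have hc : (Pm.1 : ℚ) ≤ Qm.1 := by exact_mod_cast hlt.le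
        rw [len1]
        exact abs_of_nonneg (by show (0 : ℚ) ≤ (Qm.1 : ℚ) - Pm.1; linarith)
      rw [decl, hlen1, hlen2, hσ]
      push_cast
      field_simp
      linarith [hdval]
    · have hσ : sigmaR S = 0 := by simp only [sigmaR, hS]; rw [if_pos heq]
      have hd0 : d = 0 := by
        have : (Pm.1 : ℚ) = Qm.1 := by exact_mod_cast heq
        have := hdval
        nlinarith [hn]
      rw [decl, hσ, hd0]
      norm_num
    · have hσ : sigmaR S = 1 := by
        simp only [sigmaR, hS]
        rw [if_neg (by omega), if_neg (by omega)]
      have hlen1 : len1 S = (Pm.1 : ℚ) - Qm.1 := by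
        have hc : (Qm.1 : ℚ) ≤ Pm.1 := by exact_mod_cast hgt.le
        rw [len1]
        rw [abs_of_nonpos (by show (Qm.1 : ℚ) - Pm.1 ≤ 0; linarith)]
        ring
      rw [decl, hlen1, hlen2, hσ]
      push_cast
      field_simp
      linarith [hdval]
  -- the filter by OnSeg equals F
  have hFeq : (supp h).filter (OnSeg S) = F := by
    rw [hF]
    apply Finset.filter_congr
    intro p hp
    constructor
    · intro hon
      exact hlfun_eq p hon.1
    · intro hφp
      have hpF : p ∈ F := Finset.mem_filter.2 ⟨hp, hφp⟩
      have hb1 : Pm.2 ≤ p.2 := hPmmin p hpF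
      have hb2 : p.2 ≤ Qm.2 := hQmmax p hpF
      have habs : (Pm.1 ≤ p.1 ∧ p.1 ≤ Qm.1) ∨ (Qm.1 ≤ p.1 ∧ p.1 ≤ Pm.1) := by
        have e1 := hFeqn p hpF
        have e2 := hFeqn Pm hPmF
        have e3 := hFeqn Qm hQmF
        have c1 : (Pm.2 : ℚ) ≤ p.2 := by exact_mod_cast hb1
        have c2 : (p.2 : ℚ) ≤ Qm.2 := by exact_mod_cast hb2
        rcases le_total d 0 with hd0 | hd0
        · left
          have q1 : (Pm.1 : ℚ) ≤ (p.1 : ℚ) := by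
            nlinarith [mul_nonneg (sub_nonneg.2 c1) (neg_nonneg.2 hd0)]
          have q2 : (p.1 : ℚ) ≤ (Qm.1 : ℚ) := by
            nlinarith [mul_nonneg (sub_nonneg.2 c2) (neg_nonneg.2 hd0)]
          exact ⟨by exact_mod_cast q1, by exact_mod_cast q2⟩
        · right
          have q1 : (Qm.1 : ℚ) ≤ (p.1 : ℚ) := by
            nlinarith [mul_nonneg (sub_nonneg.2 c2) hd0]
          have q2 : (p.1 : ℚ) ≤ (Pm.1 : ℚ) := by
            nlinarith [mul_nonneg (sub_nonneg.2 c1) hd0]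
          exact ⟨by exact_mod_cast q1, by exact_mod_cast q2⟩
      refine ⟨?_, ?_, ?_, ?_, ?_⟩
      · have : lfun S p = lfun S S.P := by
          have : (lfun S p : ℚ) = (lfun S S.P : ℚ) := by
            rw [hlfunQ, hlfunQ]
            congr 1
            rw [hφp]
            exact hφP.symm
          exact_mod_cast this
        exact this
      · show min S.P.1 S.Q.1 ≤ p.1
        simp only [hS]
        omega
      · show p.1 ≤ max S.P.1 S.Q.1
        simp only [hS]
        omega
      · show min S.P.2 S.Q.2 ≤ p.2
        simp only [hS]
        omega
      · show p.2 ≤ max S.P.2 S.Q.2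
        simp only [hS]
        omega
  -- conclude
  refine ⟨S, hright, by rw [← hdecl], ?_⟩
  rw [inSub, hFeq]
  have hterm : ∀ p ∈ F,
      (HahnSeries.single (OrderDual.toDual (p.1 : ℚ)) (coeff2 h p) : K) * (lead a) ^ p.2
        = HahnSeries.single (OrderDual.toDual M) (coeff2 h p * l ^ p.2) := by
    intro p hpF
    rw [lead, horda, HahnSeries.single_pow, HahnSeries.single_mul_single, toDual_nsmul',
      ← toDual_add']
    have harg : (p.1 : ℚ) + (p.2 : ℚ) * d = M := by
      have := (Finset.mem_filter.1 hpF).2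
      simp only [hφdef] at this
      linarith
    rw [harg, ← hl]
  rw [Finset.sum_congr rfl hterm]
  have hfin : ∑ x ∈ F, (HahnSeries.single (OrderDual.toDual M) (coeff2 h x * l ^ x.2) : K)
      = HahnSeries.single (OrderDual.toDual M) (∑ x ∈ F, coeff2 h x * l ^ x.2) :=
    (map_sum (HahnSeries.single.addMonoidHom (OrderDual.toDual M))
      (fun x => coeff2 h x * l ^ x.2) F).symm
  rw [hfin, hsum0]
  exact HahnSeries.single_eq_zero
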